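/- In the α-SMC algorithm, suppose that for each t the connectivity matrix α_{t−1} is F_{t−1}-measurable and almost surely satisfies Σ_{i=1}^N α_{t−1}^{ij} = 1 for every j (columns sum to one). Then for every t ≥ 0 and every bounded measurable φ : X → ℝ, E[ γ̂_t^N(φ) ] = γ_t(φ); in particular E[ Ẑ_t^N ] = Z_t. -/

import Mathlib

open MeasureTheory ProbabilityTheory
open scoped BigOperators

/-- Iterated Feynman-Kac operator: `Qiter K g t φ = Q_1 (Q_2 (⋯ (Q_t φ)))`, where
`Q_t φ = g_{t-1} ⬝ K_t φ`.  The unnormalised measure of the state-space model satisfies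
`γ_t(φ) = π₀(Qiter K g t φ)`. -/
noncomputable def Qiter {X : Type*} [MeasurableSpace X]
    (K : ℕ → ProbabilityTheory.Kernel X X) (g : ℕ → X → ℝ) : ℕ → (X → ℝ) → X → ℝ
  | 0, φ => φ
  | (t + 1), φ => Qiter K g t (fun x => g t x * ∫ y, φ y ∂(K (t + 1) x))

lemma Qiter_const_mul {X : Type*} [MeasurableSpace X]
    (K : ℕ → ProbabilityTheory.Kernel X X) (g : ℕ → X → ℝ) (c : ℝ) :
    ∀ (t : ℕ) (φ : X → ℝ),
      Qiter K g t (fun x => c * φ x) = fun x => c * Qiter K g t φ x := by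
  intro t
  induction t with
  | zero => intro φ; rfl
  | succ t ih =>
    intro φ
    show Qiter K g t _ = _
    have h : (fun x => g t x * ∫ y, c * φ y ∂(K (t + 1) x))
        = (fun x => c * (g t x * ∫ y, φ y ∂(K (t + 1) x))) := by
      funext x; rw [integral_const_mul]; ring
    rw [h, ih]
    rfl

lemma integrable_of_abs_le {Ω : Type*} [MeasurableSpace Ω] {P : MeasureTheory.Measure Ω}
    [MeasureTheory.IsFiniteMeasure P] {f : Ω → ℝ}
    (hf : MeasureTheory.AEStronglyMeasurable f P) (C : ℝ) (h : ∀ ω, |f ω| ≤ C) :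
    MeasureTheory.Integrable f P :=
  (MeasureTheory.integrable_const C).mono' hf
    (Filter.Eventually.of_forall fun ω => by simpa [Real.norm_eq_abs] using h ω)

theorem stmt13
    -- the state space and the state-space model
    {X : Type*} [MeasurableSpace X]
    (π₀ : Measure X) [IsProbabilityMeasure π₀]
    (K : ℕ → Kernel X X) (hK : ∀ t, IsMarkovKernel (K t))
    (g : ℕ → X → ℝ) (hgmeas : ∀ t, Measurable (g t)) (hgpos : ∀ t x, 0 < g t x)
    (κg : ℝ) (hgbd : ∀ t x, g t x ≤ κg)
    -- the underlying probability space
    {Ω : Type*} [m0 : MeasurableSpace Ω] (P : Measure Ω) [IsProbabilityMeasure P]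
    -- the α-SMC particle system with `N` particles
    (N : ℕ) (hN : 1 ≤ N)
    (F : ℕ → MeasurableSpace Ω) (hFle : ∀ t, F t ≤ m0) (hFmono : Monotone F)
    (ξ : ℕ → Fin N → Ω → X) (A : ℕ → Ω → Matrix (Fin N) (Fin N) ℝ)
    (W : ℕ → Fin N → Ω → ℝ)
    (hξmeas : ∀ t i, Measurable[F t] (ξ t i))
    -- `α_{t}` is `F_{t}`-measurable, entrywise
    (hAmeas : ∀ t i j, Measurable[F t] (fun ω => A t ω i j))
    -- the connectivity matrices are row-stochastic
    (hAnn : ∀ t ω i j, 0 ≤ A t ω i j)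
    (hArow : ∀ t ω i, ∑ j, A t ω i j = 1)
    -- the columns of the connectivity matrices sum to one
    (hAcol : ∀ t ω j, ∑ i, A t ω i j = 1)
    -- initial weights and weight recursion
    (hW0 : ∀ i ω, W 0 i ω = 1)
    (hWrec : ∀ t i ω, W (t + 1) i ω = ∑ j, A t ω i j * W t j ω * g t (ξ t j ω))
    -- initialisation: i.i.d. samples from `π₀`
    (hξ0meas : ∀ i, Measurable (ξ 0 i))
    (hξ0indep : iIndepFun (ξ 0) P)
    (hξ0law : ∀ i, Measure.map (ξ 0 i) P = π₀)
    -- conditionally on `F t`, the particles at time `t+1` are independent with the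
    -- prescribed mixture distributions
    (hcond : ∀ t (φ : Fin N → X → ℝ), (∀ i, Measurable (φ i)) → (∀ i x, |φ i x| ≤ 1) →
      P[(fun ω => ∏ i, φ i (ξ (t + 1) i ω)) | F t]
        =ᵐ[P] fun ω => ∏ i, ((W (t + 1) i ω)⁻¹ *
            ∑ j, A t ω i j * W t j ω * g t (ξ t j ω) * ∫ y, φ i y ∂(K (t + 1) (ξ t j ω)))) :
    -- conclusion: `E[γ̂_t^N(φ)] = γ_t(φ)`, and in particular `E[Ẑ_t^N] = Z_t`
    ∀ t (φ : X → ℝ), Measurable φ → (∃ b : ℝ, ∀ x, |φ x| ≤ b) →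
      (∫ ω, ((N : ℝ)⁻¹ * ∑ i, W t i ω * φ (ξ t i ω)) ∂P = ∫ x, Qiter K g t φ x ∂π₀) ∧
      (∫ ω, ((N : ℝ)⁻¹ * ∑ i, W t i ω) ∂P = ∫ x, Qiter K g t (fun _ => 1) x ∂π₀) := by
  have hN0 : (N : ℝ) ≠ 0 := Nat.cast_ne_zero.mpr (by omega)
  set c : ℝ := max κg 1 with hc_def
  have hc1 : (1 : ℝ) ≤ c := le_max_right _ _
  have hc0 : (0 : ℝ) < c := lt_of_lt_of_le one_pos hc1
  have hκc : κg ≤ c := le_max_left _ _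
  have hgnn : ∀ t x, 0 ≤ g t x := fun t x => (hgpos t x).le
  have hξm0 : ∀ t i, Measurable (ξ t i) := fun t i => (hξmeas t i).mono (hFle t) le_rfl
  -- measurability of the weights
  have mW : ∀ t i, Measurable[F t] (W t i) := by
    intro t
    induction t with
    | zero =>
      intro i
      have h : W 0 i = fun _ => (1 : ℝ) := funext fun ω => hW0 i ω
      rw [h]; exact measurable_const
    | succ t ih =>
      intro i
      have h : W (t + 1) i = fun ω => ∑ j, A t ω i j * W t j ω * g t (ξ t j ω) :=
        funext fun ω => hWrec t i ω
      rw [h]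
      exact (Finset.measurable_sum _ fun j _ =>
        ((hAmeas t i j).mul (ih j)).mul ((hgmeas t).comp (hξmeas t j))).mono
        (hFmono (Nat.le_succ t)) le_rfl
  have mWnext : ∀ t i, Measurable[F t] (W (t + 1) i) := by
    intro t i
    have h : W (t + 1) i = fun ω => ∑ j, A t ω i j * W t j ω * g t (ξ t j ω) :=
      funext fun ω => hWrec t i ω
    rw [h]
    exact Finset.measurable_sum _ fun j _ =>
      ((hAmeas t i j).mul (mW t j)).mul ((hgmeas t).comp (hξmeas t j))
  have hWm0 : ∀ t i, Measurable (W t i) := fun t i => (mW t i).mono (hFle t) le_rfl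
  -- positivity of the weights
  have Wpos : ∀ t i ω, 0 < W t i ω := by
    intro t
    induction t with
    | zero => intro i ω; rw [hW0]; exact one_pos
    | succ t ih =>
      intro i ω
      rw [hWrec]
      have hex : ∃ j, 0 < A t ω i j := by
        by_contra h
        push_neg at h
        have h2 : (∑ j, A t ω i j) ≤ 0 := Finset.sum_nonpos fun j _ => h j
        rw [hArow] at h2; linarith
      obtain ⟨j0, hj0⟩ := hex
      refine Finset.sum_pos' (fun j _ => ?_) ⟨j0, Finset.mem_univ j0, ?_⟩
      · exact mul_nonneg (mul_nonneg (hAnn t ω i j) (ih j ω).le) (hgnn t _)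
      · exact mul_pos (mul_pos hj0 (ih j0 ω)) (hgpos t _)
  -- boundedness of the weights
  have Wbd : ∀ t i ω, W t i ω ≤ c ^ t := by
    intro t
    induction t with
    | zero => intro i ω; rw [hW0]; simp
    | succ t ih =>
      intro i ω
      rw [hWrec]
      calc (∑ j, A t ω i j * W t j ω * g t (ξ t j ω))
          ≤ ∑ j, A t ω i j * c ^ (t + 1) := by
            refine Finset.sum_le_sum fun j _ => ?_
            rw [mul_assoc]
            refine mul_le_mul_of_nonneg_left ?_ (hAnn t ω i j)
            have h1 : W t j ω * g t (ξ t j ω) ≤ c ^ t * κg :=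
              mul_le_mul (ih j ω) (hgbd t _) (hgnn t _) (pow_nonneg hc0.le t)
            have h2 : c ^ t * κg ≤ c ^ t * c :=
              mul_le_mul_of_nonneg_left hκc (pow_nonneg hc0.le t)
            exact h1.trans (h2.trans_eq (pow_succ c t).symm)
        _ = c ^ (t + 1) := by rw [← Finset.sum_mul, hArow, one_mul]
  have hA1 : ∀ t ω i j, A t ω i j ≤ 1 := by
    intro t ω i j
    have h := Finset.single_le_sum (f := fun j => A t ω i j)
      (fun k _ => hAnn t ω i k) (Finset.mem_univ j)
    rwa [hArow] at h
  -- the key identity, for test functions bounded by 1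
  have key : ∀ t, ∀ φ : X → ℝ, Measurable φ → (∀ x, |φ x| ≤ 1) →
      ∫ ω, ((N : ℝ)⁻¹ * ∑ i, W t i ω * φ (ξ t i ω)) ∂P = ∫ x, Qiter K g t φ x ∂π₀ := by
    intro t
    induction t with
    | zero =>
      intro φ hφ hφb
      have hint0 : ∀ i : Fin N, Integrable (fun ω => W 0 i ω * φ (ξ 0 i ω)) P := by
        intro i
        refine integrable_of_abs_le (((hWm0 0 i).mul (hφ.comp (hξm0 0 i))).aestronglyMeasurable)
          1 (fun ω => ?_)
        rw [hW0, one_mul]; exact hφb _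
      have heach : ∀ i : Fin N, ∫ ω, W 0 i ω * φ (ξ 0 i ω) ∂P = ∫ x, φ x ∂π₀ := by
        intro i
        simp only [hW0, one_mul]
        rw [← hξ0law i]
        exact (integral_map (hξ0meas i).aemeasurable hφ.aestronglyMeasurable).symm
      simp only [Qiter]
      rw [integral_const_mul, integral_finset_sum _ (fun i _ => hint0 i),
        Finset.sum_congr rfl fun i _ => heach i, Finset.sum_const, Finset.card_univ,
        Fintype.card_fin, nsmul_eq_mul, ← mul_assoc, inv_mul_cancel₀ hN0, one_mul]
    | succ t ih =>
      intro φ hφ hφb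
      haveI := hK (t + 1)
      simp only [Qiter]
      set ψ : X → ℝ := fun x => g t x * ∫ y, φ y ∂(K (t + 1) x) with hψdef
      -- measurability and bounds for ψ
      have hKint_meas : Measurable fun x => ∫ y, φ y ∂(K (t + 1) x) := by
        have h0 : StronglyMeasurable (fun p : X × X => φ p.2) :=
          (hφ.comp measurable_snd).stronglyMeasurable
        exact (h0.integral_kernel_prod_right' (κ := K (t + 1))).measurable
      have hKint_bd : ∀ x, |∫ y, φ y ∂(K (t + 1) x)| ≤ 1 := by
        intro x
        have h := norm_integral_le_of_norm_le_const (μ := K (t + 1) x) (f := φ) (C := 1)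
          (Filter.Eventually.of_forall fun y => by simpa [Real.norm_eq_abs] using hφb y)
        simpa [Real.norm_eq_abs, measure_univ] using h
      have hψmeas : Measurable ψ := (hgmeas t).mul hKint_meas
      have hψbd : ∀ x, |ψ x| ≤ c := by
        intro x
        rw [hψdef]
        simp only
        rw [abs_mul, abs_of_nonneg (hgnn t x)]
        have hκ0 : 0 ≤ κg := (hgpos t x).le.trans (hgbd t x)
        calc g t x * |∫ y, φ y ∂(K (t + 1) x)|
            ≤ κg * 1 := mul_le_mul (hgbd t x) (hKint_bd x) (abs_nonneg _) hκ0
          _ = κg := mul_one _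
          _ ≤ c := hκc
      set ψ' : X → ℝ := fun x => c⁻¹ * ψ x with hψ'def
      have hψ'meas : Measurable ψ' := measurable_const.mul hψmeas
      have hψ'bd : ∀ x, |ψ' x| ≤ 1 := by
        intro x
        rw [hψ'def]
        simp only
        rw [abs_mul, abs_of_nonneg (inv_nonneg.2 hc0.le)]
        calc c⁻¹ * |ψ x| ≤ c⁻¹ * c := mul_le_mul_of_nonneg_left (hψbd x) (inv_nonneg.2 hc0.le)
          _ = 1 := inv_mul_cancel₀ hc0.ne'
      have ihψ := ih ψ' hψ'meas hψ'bd
      -- per-particle identity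
      have perI : ∀ i : Fin N, ∫ ω, W (t + 1) i ω * φ (ξ (t + 1) i ω) ∂P
          = ∫ ω, (∑ j, A t ω i j * (W t j ω * ψ (ξ t j ω))) ∂P := by
        intro i
        set Φ : Fin N → X → ℝ := fun i' => if i' = i then φ else fun _ => 1 with hΦdef
        have hΦmeas : ∀ i', Measurable (Φ i') := by
          intro i'
          rw [hΦdef]
          simp only
          split_ifs
          · exact hφ
          · exact measurable_const
        have hΦbd : ∀ i' x, |Φ i' x| ≤ 1 := by
          intro i' x
          rw [hΦdef]
          simp only
          split_ifs
          · exact hφb x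
          · simp
        have h1 := hcond t Φ hΦmeas hΦbd
        have hL : (fun ω => ∏ i', Φ i' (ξ (t + 1) i' ω)) = fun ω => φ (ξ (t + 1) i ω) := by
          funext ω
          rw [Finset.prod_eq_single i]
          · simp [hΦdef]
          · intro j _ hj; simp [hΦdef, hj]
          · intro h; exact absurd (Finset.mem_univ i) h
        have hR : (fun ω => ∏ i', ((W (t + 1) i' ω)⁻¹ *
              ∑ j, A t ω i' j * W t j ω * g t (ξ t j ω) * ∫ y, Φ i' y ∂(K (t + 1) (ξ t j ω))))
            = fun ω => (W (t + 1) i ω)⁻¹ *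
              ∑ j, A t ω i j * W t j ω * g t (ξ t j ω) * ∫ y, φ y ∂(K (t + 1) (ξ t j ω)) := by
          funext ω
          rw [Finset.prod_eq_single i]
          · simp [hΦdef]
          · intro j _ hj
            have hone : ∀ x : X, (∫ y, Φ j y ∂(K (t + 1) x)) = 1 := by
              intro x; simp [hΦdef, hj]
            simp only [hone, mul_one]
            rw [← hWrec t j ω]
            exact inv_mul_cancel₀ (Wpos (t + 1) j ω).ne'
          · intro h; exact absurd (Finset.mem_univ i) h
        rw [hL, hR] at h1
        -- integrability
        have hint_φξ : Integrable (fun ω => φ (ξ (t + 1) i ω)) P :=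
          integrable_of_abs_le ((hφ.comp (hξm0 (t + 1) i)).aestronglyMeasurable) 1
            (fun ω => hφb _)
        have hint_prod : Integrable (fun ω => W (t + 1) i ω * φ (ξ (t + 1) i ω)) P := by
          refine integrable_of_abs_le
            (((hWm0 (t + 1) i).mul (hφ.comp (hξm0 (t + 1) i))).aestronglyMeasurable)
            (c ^ (t + 1)) (fun ω => ?_)
          rw [abs_mul, abs_of_nonneg (Wpos _ _ _).le]
          calc W (t + 1) i ω * |φ (ξ (t + 1) i ω)|
              ≤ c ^ (t + 1) * 1 :=
                mul_le_mul (Wbd _ _ _) (hφb _) (abs_nonneg _) (pow_nonneg hc0.le _)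
            _ = c ^ (t + 1) := mul_one _
        have hWsm : StronglyMeasurable[F t] (W (t + 1) i) := (mWnext t i).stronglyMeasurable
        haveI : SigmaFinite (P.trim (hFle t)) := inferInstance
        calc ∫ ω, W (t + 1) i ω * φ (ξ (t + 1) i ω) ∂P
            = ∫ ω, (P[(W (t + 1) i) * (fun ω => φ (ξ (t + 1) i ω)) | F t]) ω ∂P :=
              (integral_condExp (hFle t)).symm
          _ = ∫ ω, ((W (t + 1) i) * P[(fun ω => φ (ξ (t + 1) i ω)) | F t]) ω ∂P :=
              integral_congr_ae (condExp_mul_of_stronglyMeasurable_left hWsm hint_prod hint_φξ)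
          _ = ∫ ω, W (t + 1) i ω * ((W (t + 1) i ω)⁻¹ *
                ∑ j, A t ω i j * W t j ω * g t (ξ t j ω) *
                  ∫ y, φ y ∂(K (t + 1) (ξ t j ω))) ∂P := by
              refine integral_congr_ae ?_
              filter_upwards [h1] with ω hω
              simp only [Pi.mul_apply, hω]
          _ = ∫ ω, (∑ j, A t ω i j * (W t j ω * ψ (ξ t j ω))) ∂P := by
              refine integral_congr_ae (Filter.Eventually.of_forall fun ω => ?_)
              dsimp only
              rw [← mul_assoc, mul_inv_cancel₀ (Wpos (t + 1) i ω).ne', one_mul]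
              refine Finset.sum_congr rfl fun j _ => ?_
              rw [hψdef]
              simp only
              ring
      -- integrability for the assembly
      have hint_next : ∀ i : Fin N, Integrable (fun ω => W (t + 1) i ω * φ (ξ (t + 1) i ω)) P := by
        intro i
        refine integrable_of_abs_le
          (((hWm0 (t + 1) i).mul (hφ.comp (hξm0 (t + 1) i))).aestronglyMeasurable)
          (c ^ (t + 1)) (fun ω => ?_)
        rw [abs_mul, abs_of_nonneg (Wpos _ _ _).le]
        calc W (t + 1) i ω * |φ (ξ (t + 1) i ω)|
            ≤ c ^ (t + 1) * 1 :=
              mul_le_mul (Wbd _ _ _) (hφb _) (abs_nonneg _) (pow_nonneg hc0.le _)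
          _ = c ^ (t + 1) := mul_one _
      have hSint : ∀ i : Fin N,
          Integrable (fun ω => ∑ j, A t ω i j * (W t j ω * ψ (ξ t j ω))) P := by
        intro i
        refine integrable_of_abs_le
          ((Finset.measurable_sum Finset.univ fun j _ =>
            ((hAmeas t i j).mono (hFle t) le_rfl).mul
              ((hWm0 t j).mul (hψmeas.comp (hξm0 t j)))).aestronglyMeasurable)
          ((N : ℝ) * c ^ (t + 1)) (fun ω => ?_)
        calc |∑ j, A t ω i j * (W t j ω * ψ (ξ t j ω))|
            ≤ ∑ j, |A t ω i j * (W t j ω * ψ (ξ t j ω))| := Finset.abs_sum_le_sum_abs _ _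
          _ ≤ ∑ _j : Fin N, c ^ (t + 1) := by
              refine Finset.sum_le_sum fun j _ => ?_
              rw [abs_mul, abs_mul, abs_of_nonneg (hAnn t ω i j),
                abs_of_nonneg (Wpos t j ω).le]
              calc A t ω i j * (W t j ω * |ψ (ξ t j ω)|)
                  ≤ 1 * (c ^ t * c) :=
                    mul_le_mul (hA1 t ω i j)
                      (mul_le_mul (Wbd t j ω) (hψbd _) (abs_nonneg _) (pow_nonneg hc0.le t))
                      (mul_nonneg (Wpos t j ω).le (abs_nonneg _)) zero_le_one
                _ = c ^ (t + 1) := by rw [one_mul, ← pow_succ]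
          _ = (N : ℝ) * c ^ (t + 1) := by
              rw [Finset.sum_const, Finset.card_univ, Fintype.card_fin, nsmul_eq_mul]
      -- pointwise double-sum swap using column-stochasticity
      have hswap : ∀ ω, (∑ i, ∑ j, A t ω i j * (W t j ω * ψ (ξ t j ω)))
          = ∑ j, W t j ω * ψ (ξ t j ω) := by
        intro ω
        rw [Finset.sum_comm]
        refine Finset.sum_congr rfl fun j _ => ?_
        rw [← Finset.sum_mul, hAcol, one_mul]
      -- transfer of the induction hypothesis from ψ' to ψ
      have e : ∫ ω, ((N : ℝ)⁻¹ * ∑ i, W t i ω * ψ (ξ t i ω)) ∂P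
          = ∫ x, Qiter K g t ψ x ∂π₀ := by
        have h3 : ∫ ω, ((N : ℝ)⁻¹ * ∑ i, W t i ω * ψ' (ξ t i ω)) ∂P
            = c⁻¹ * ∫ ω, ((N : ℝ)⁻¹ * ∑ i, W t i ω * ψ (ξ t i ω)) ∂P := by
          rw [← integral_const_mul]
          refine integral_congr_ae (Filter.Eventually.of_forall fun ω => ?_)
          simp only [hψ'def]
          have h : ∑ i, W t i ω * (c⁻¹ * ψ (ξ t i ω))
              = c⁻¹ * ∑ i, W t i ω * ψ (ξ t i ω) := by
            rw [Finset.mul_sum]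
            exact Finset.sum_congr rfl fun i _ => by ring
          rw [h]; ring
        have h4 : ∫ x, Qiter K g t ψ' x ∂π₀ = c⁻¹ * ∫ x, Qiter K g t ψ x ∂π₀ := by
          rw [hψ'def, Qiter_const_mul K g c⁻¹ t ψ, integral_const_mul]
        rw [h3, h4] at ihψ
        exact mul_left_cancel₀ (inv_ne_zero hc0.ne') ihψ
      calc ∫ ω, ((N : ℝ)⁻¹ * ∑ i, W (t + 1) i ω * φ (ξ (t + 1) i ω)) ∂P
          = (N : ℝ)⁻¹ * ∑ i, ∫ ω, W (t + 1) i ω * φ (ξ (t + 1) i ω) ∂P := by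
            rw [integral_const_mul, integral_finset_sum _ (fun i _ => hint_next i)]
        _ = (N : ℝ)⁻¹ * ∑ i, ∫ ω, (∑ j, A t ω i j * (W t j ω * ψ (ξ t j ω))) ∂P := by
            rw [Finset.sum_congr rfl fun i _ => perI i]
        _ = (N : ℝ)⁻¹ * ∫ ω, (∑ i, ∑ j, A t ω i j * (W t j ω * ψ (ξ t j ω))) ∂P := by
            rw [integral_finset_sum _ (fun i _ => hSint i)]
        _ = ∫ ω, ((N : ℝ)⁻¹ * ∑ j, W t j ω * ψ (ξ t j ω)) ∂P := by
            rw [← integral_const_mul]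
            exact integral_congr_ae (Filter.Eventually.of_forall fun ω => by dsimp only; rw [hswap ω])
        _ = ∫ x, Qiter K g t ψ x ∂π₀ := e
  -- derive the result for arbitrary bounded test functions
  have gen : ∀ t (φ : X → ℝ), Measurable φ → (∃ b : ℝ, ∀ x, |φ x| ≤ b) →
      ∫ ω, ((N : ℝ)⁻¹ * ∑ i, W t i ω * φ (ξ t i ω)) ∂P = ∫ x, Qiter K g t φ x ∂π₀ := by
    rintro t φ hφ ⟨b, hb⟩
    set d : ℝ := |b| + 1 with hd_def
    have hd0 : (0 : ℝ) < d := by positivity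
    have hφ' : ∀ x, |d⁻¹ * φ x| ≤ 1 := by
      intro x
      rw [abs_mul, abs_of_nonneg (inv_nonneg.2 hd0.le)]
      have h1 : |φ x| ≤ d := (hb x).trans ((le_abs_self b).trans (by rw [hd_def]; linarith))
      calc d⁻¹ * |φ x| ≤ d⁻¹ * d := mul_le_mul_of_nonneg_left h1 (inv_nonneg.2 hd0.le)
        _ = 1 := inv_mul_cancel₀ hd0.ne'
    have hk := key t (fun x => d⁻¹ * φ x) (measurable_const.mul hφ) hφ'
    have hL : (fun ω => (N : ℝ)⁻¹ * ∑ i, W t i ω * (d⁻¹ * φ (ξ t i ω)))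
        = fun ω => d⁻¹ * ((N : ℝ)⁻¹ * ∑ i, W t i ω * φ (ξ t i ω)) := by
      funext ω
      have h : ∑ i, W t i ω * (d⁻¹ * φ (ξ t i ω))
          = d⁻¹ * ∑ i, W t i ω * φ (ξ t i ω) := by
        rw [Finset.mul_sum]
        exact Finset.sum_congr rfl fun i _ => by ring
      rw [h]; ring
    rw [hL, Qiter_const_mul K g d⁻¹ t φ] at hk
    simp only [integral_const_mul] at hk
    rw [integral_const_mul]
    exact mul_left_cancel₀ (inv_ne_zero hd0.ne') hk
  intro t φ hφ hbd
  refine ⟨gen t φ hφ hbd, ?_⟩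
  have h := gen t (fun _ => 1) measurable_const ⟨1, by simp⟩
  simpa using h
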